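/- Let P ∈ 𝒫(A) and let Γ_𝔞(Σ(P,σθ)) = Σ_{α ∈ Σ(P,σθ)} ℝ≥0 H_α be the cone in 𝔞 generated by the coroot-type vectors H_α for α ∈ Σ(P,σθ). Then Γ_𝔞(Σ(P,σθ)) ∩ 𝔞_h = {0}, and consequently the restriction of the projection pr_q : 𝔞 → 𝔞_q to Γ_𝔞(Σ(P,σθ)) is a proper map. -/
import Mathlib


open RealInnerProductSpace

/-- Let `P` be a positive system `Σ(P)` of roots in a Euclidean space `𝔞 = E`
(identifying roots with vectors via the inner product; `H_α = (2/⟪α,α⟫)α`), and let `σ` be the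
isometric linear involution of `𝔞` induced by the symmetric-space involution, with `𝔞_h` its
`+1` eigenspace and `pr_q : x ↦ (x - σx)/2` the projection onto the `-1` eigenspace `𝔞_q`.
Let `S = Σ(P,σθ) = {α ∈ Σ(P) : -σα ∈ Σ(P)}` and let `Γ = Γ_𝔞(Σ(P,σθ))` be the cone generated
by the `H_α`, `α ∈ S`.  Then `Γ ∩ 𝔞_h = {0}` and, consequently, the restriction of `pr_q`
to `Γ` is a proper map. -/
theorem stmt_15 {E : Type*} [NormedAddCommGroup E] [InnerProductSpace ℝ E]
    [FiniteDimensional ℝ E]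
    (σ : E ≃ₗᵢ[ℝ] E) (hσ : ∀ v, σ (σ v) = v)
    (P : Finset E) (h0 : (0 : E) ∉ P)
    (hreg : ∃ Y : E, ∀ α ∈ P, 0 < ⟪α, Y⟫)
    (S : Finset E) (hS : ∀ α, α ∈ S ↔ α ∈ P ∧ -σ α ∈ P) :
    ({x : E | ∃ c : E → ℝ, (∀ α, 0 ≤ c α) ∧
        x = ∑ α ∈ S, c α • ((2 / ⟪α, α⟫) • α)} ∩ {x | σ x = x} = {0}) ∧
    IsProperMap (fun x : {x : E | ∃ c : E → ℝ, (∀ α, 0 ≤ c α) ∧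
        x = ∑ α ∈ S, c α • ((2 / ⟪α, α⟫) • α)} => (1 / 2 : ℝ) • ((x : E) - σ x)) := by
  classical
  obtain ⟨Y, hY⟩ := hreg
  set X : E := Y - σ Y with hX
  -- σ is self-adjoint
  have hσadj : ∀ a b : E, ⟪σ a, b⟫ = ⟪a, σ b⟫ := by
    intro a b
    calc ⟪σ a, b⟫ = ⟪σ a, σ (σ b)⟫ := by rw [hσ]
    _ = ⟪a, σ b⟫ := σ.inner_map_map a (σ b)
  have hσX : σ X = -X := by
    simp only [hX, map_sub, hσ]
    abel
  -- positivity of ⟪H_α, X⟫ for α ∈ S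
  have hd : ∀ α ∈ S, 0 < ⟪(2 / ⟪α, α⟫ : ℝ) • α, X⟫ := by
    intro α hα
    obtain ⟨hP, hP'⟩ := (hS α).1 hα
    have h1 : 0 < ⟪α, Y⟫ := hY α hP
    have h2 : 0 < ⟪-σ α, Y⟫ := hY _ hP'
    have hα0 : α ≠ 0 := by rintro rfl; simp at h1
    have hαα : (0 : ℝ) < ⟪α, α⟫ := by
      have hn : 0 < ‖α‖ := norm_pos_iff.mpr hα0
      rw [real_inner_self_eq_norm_mul_norm]; exact mul_pos hn hn
    rw [real_inner_smul_left, hX, inner_sub_right]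
    have hswap : ⟪α, σ Y⟫ = ⟪σ α, Y⟫ := (hσadj α Y).symm
    rw [inner_neg_left] at h2
    have : (0 : ℝ) < ⟪α, Y⟫ - ⟪α, σ Y⟫ := by rw [hswap]; linarith
    have h2' : (0:ℝ) < 2 / ⟪α, α⟫ := by positivity
    exact mul_pos h2' this
  -- inner product of a cone combination with X
  have hsum : ∀ c : E → ℝ,
      ⟪∑ α ∈ S, c α • ((2 / ⟪α, α⟫ : ℝ) • α), X⟫
        = ∑ α ∈ S, c α * ⟪(2 / ⟪α, α⟫ : ℝ) • α, X⟫ := by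
    intro c
    rw [sum_inner]
    exact Finset.sum_congr rfl fun α _ => real_inner_smul_left _ _ _
  have hfix : ∀ x : E, σ x = x → ⟪x, X⟫ = 0 := by
    intro x hx
    have h := σ.inner_map_map x X
    rw [hx, hσX, inner_neg_right] at h
    linarith
  -- For any x, ⟪(1/2)•(x - σ x), X⟫ = ⟪x, X⟫
  have hgX : ∀ x : E, ⟪(1 / 2 : ℝ) • (x - σ x), X⟫ = ⟪x, X⟫ := by
    intro x
    have h : ⟪σ x, X⟫ = -⟪x, X⟫ := by rw [hσadj x X, hσX, inner_neg_right]
    rw [real_inner_smul_left, inner_sub_left, h]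
    ring
  constructor
  · -- Part 1: Γ ∩ 𝔞_h = {0}
    ext x
    simp only [Set.mem_inter_iff, Set.mem_setOf_eq, Set.mem_singleton_iff]
    constructor
    · rintro ⟨⟨c, hc, rfl⟩, hfx⟩
      have h0' : ∑ α ∈ S, c α * ⟪(2 / ⟪α, α⟫ : ℝ) • α, X⟫ = 0 := by
        rw [← hsum c, hfix _ hfx]
      have hzero := (Finset.sum_eq_zero_iff_of_nonneg
        (fun α hα => mul_nonneg (hc α) (hd α hα).le)).1 h0'
      refine Finset.sum_eq_zero fun α hα => ?_
      have hcα : c α = 0 := by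
        rcases mul_eq_zero.1 (hzero α hα) with h | h
        · exact h
        · exact absurd h (ne_of_gt (hd α hα))
      simp [hcα]
    · rintro rfl
      exact ⟨⟨fun _ => 0, fun _ => le_refl 0, by simp⟩, map_zero σ⟩
  · -- Part 2: properness
    set Γ : Set E := {x : E | ∃ c : E → ℝ, (∀ α, 0 ≤ c α) ∧
        x = ∑ α ∈ S, c α • ((2 / ⟪α, α⟫ : ℝ) • α)} with hΓ
    set g : E → E := fun x => (1 / 2 : ℝ) • (x - σ x) with hg
    have hgcont : Continuous g := by
      apply Continuous.const_smul
      exact continuous_id.sub σ.continuous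
    rw [isProperMap_iff_isCompact_preimage]
    refine ⟨(hgcont.comp continuous_subtype_val), fun K hK => ?_⟩
    rw [Topology.IsEmbedding.subtypeVal.isCompact_iff]
    -- bound on ⟪k, X⟫ for k ∈ K
    have hXcont : Continuous fun k : E => ⟪k, X⟫ := by
      exact (continuous_id.inner continuous_const)
    obtain ⟨M0, hM0⟩ := (hK.image hXcont).bddAbove
    set M : ℝ := max M0 0 with hM
    -- the compact coefficient set
    set d : {a // a ∈ S} → ℝ := fun i => ⟪(2 / ⟪(i : E), (i : E)⟫ : ℝ) • (i : E), X⟫ with hdS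
    have hd' : ∀ i : {a // a ∈ S}, 0 < d i := fun i => hd i i.2
    set C : Set ({a // a ∈ S} → ℝ) :=
      {c | (∀ i, 0 ≤ c i) ∧ ∑ i, c i * d i ≤ M} with hCdef
    have hCsub : C ⊆ Set.pi Set.univ fun i => Set.Icc 0 (M / d i) := by
      rintro c ⟨hc1, hc2⟩ i _
      refine ⟨hc1 i, ?_⟩
      have hle : c i * d i ≤ ∑ j, c j * d j :=
        Finset.single_le_sum (fun j _ => mul_nonneg (hc1 j) (hd' j).le) (Finset.mem_univ i)
      exact (le_div_iff₀ (hd' i)).2 (hle.trans hc2)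
    have hCclosed : IsClosed C := by
      have h1 : IsClosed {c : {a // a ∈ S} → ℝ | ∀ i, 0 ≤ c i} := by
        have : {c : {a // a ∈ S} → ℝ | ∀ i, 0 ≤ c i} = ⋂ i, {c | 0 ≤ c i} := by
          ext c; simp
        rw [this]
        exact isClosed_iInter fun i => isClosed_le continuous_const (continuous_apply i)
      exact h1.inter (isClosed_le
        (continuous_finset_sum _ fun i _ => (continuous_apply i).mul continuous_const)
        continuous_const)
    have hCcomp : IsCompact C :=
      (isCompact_univ_pi fun i => isCompact_Icc).of_isClosed_subset hCclosed hCsub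
    set L : ({a // a ∈ S} → ℝ) → E :=
      fun c => ∑ i, c i • ((2 / ⟪(i : E), (i : E)⟫ : ℝ) • (i : E)) with hLdef
    have hLcont : Continuous L := by
      apply continuous_finset_sum
      intro i _
      exact (continuous_apply i).smul continuous_const
    have himg : IsCompact (L '' C) := hCcomp.image hLcont
    have key : (Subtype.val '' ((fun x : Γ => g (x : E)) ⁻¹' K)) = (L '' C) ∩ g ⁻¹' K := by
      ext x
      constructor
      · rintro ⟨⟨x, hxΓ⟩, hxK, rfl⟩
        obtain ⟨c, hc, hxeq⟩ := hxΓ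
        have hsum' : x = L fun i => c i := by
          rw [hxeq, hLdef]
          exact (Finset.sum_coe_sort S _).symm
        have hinner : ⟪x, X⟫ = ∑ i, (fun i : {a // a ∈ S} => c (i : E)) i * d i := by
          rw [hxeq, hsum c]
          exact (Finset.sum_coe_sort S fun α => c α * ⟪(2 / ⟪α, α⟫ : ℝ) • α, X⟫).symm
        have hbound : ⟪x, X⟫ ≤ M := by
          have : ⟪g x, X⟫ = ⟪x, X⟫ := hgX x
          have hmem : ⟪g x, X⟫ ∈ (fun k : E => ⟪k, X⟫) '' K := ⟨g x, hxK, rfl⟩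
          have := hM0 hmem
          rw [hgX x] at this
          exact this.trans (le_max_left _ _)
        refine ⟨⟨fun i => c i, ⟨fun i => hc i, ?_⟩, hsum'.symm⟩, hxK⟩
        rw [← hinner]; exact hbound
      · rintro ⟨⟨c, ⟨hc1, _⟩, rfl⟩, hgK⟩
        have hΓmem : L c ∈ Γ := by
          refine ⟨fun α => if h : α ∈ S then c ⟨α, h⟩ else 0, ?_, ?_⟩
          · intro α
            by_cases h : α ∈ S
            · simp only [dif_pos h]; exact hc1 _
            · simp [dif_neg h]
          · rw [hLdef, ← Finset.sum_coe_sort S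
              (fun α => (if h : α ∈ S then c ⟨α, h⟩ else 0) • ((2 / ⟪α, α⟫ : ℝ) • α))]
            refine Finset.sum_congr rfl fun i _ => ?_
            simp [i.2]
        exact ⟨⟨L c, hΓmem⟩, hgK, rfl⟩
    show IsCompact (Subtype.val '' _)
    rw [key]
    exact himg.inter_right (hK.isClosed.preimage hgcont)
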